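/- Let p_v ≥ 1, p_c ≥ 1, d > 0, R ≥ 0 be real numbers with p_c/(1+p_v·p_c) < R/d < 1/p_v. Then the set of Nash equilibria of the two-miner mining game is exactly { (1,1), (0,0), (g1(R/d), g2(R/d)) }: the two pure equilibria in which both miners do not participate and in which both miners participate, together with the mixed equilibrium in which miner 1 does not participate with probability g1(R/d) and miner 2 does not participate with probability g2(R/d). -/

import Mathlib

/-- Expected payoff of miner 1; `x1`, `x2` are the probabilities that
miners 1 and 2 do NOT participate in mining. -/
noncomputable def u1 (pv pc d R x1 x2 : ℝ) : ℝ :=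
  (1 - x1) * (x2 * (R - d) +
    (1 - x2) * (1 / (1 + pv * pc)) * (R - d / (1 + pv * pc)))

/-- Expected payoff of miner 2. -/
noncomputable def u2 (pv pc d R x1 x2 : ℝ) : ℝ :=
  (1 - x2) * (x1 * (R - d / pv) +
    (1 - x1) * (pv * pc / (1 + pv * pc)) * (R - d * pc / (1 + pv * pc)))

/-- `p = (x1, x2) ∈ [0,1]²` is a (mixed) Nash equilibrium of the
two-miner mining game. -/
def IsNashEq (pv pc d R : ℝ) (p : ℝ × ℝ) : Prop :=
  p.1 ∈ Set.Icc (0 : ℝ) 1 ∧ p.2 ∈ Set.Icc (0 : ℝ) 1 ∧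
  (∀ y ∈ Set.Icc (0 : ℝ) 1, u1 pv pc d R p.1 p.2 ≥ u1 pv pc d R y p.2) ∧
  (∀ y ∈ Set.Icc (0 : ℝ) 1, u2 pv pc d R p.1 p.2 ≥ u2 pv pc d R p.1 y)

/-- The threshold function `g1`. -/
noncomputable def g1 (pv pc z : ℝ) : ℝ :=
  pv * pc * (z - pc / (1 + pv * pc)) / ((2 * pv * pc + 1) / (pv * (1 + pv * pc)) - z)

/-- The threshold function `g2`. -/
noncomputable def g2 (pv pc z : ℝ) : ℝ :=
  (z - 1 / (1 + pv * pc)) / (pv * pc * ((2 + pv * pc) / (1 + pv * pc) - z))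

lemma br_iff (c x : ℝ) (hx : x ∈ Set.Icc (0:ℝ) 1) :
    (∀ y ∈ Set.Icc (0:ℝ) 1, (1-x)*c ≥ (1-y)*c) ↔
      ((0 < c → x = 0) ∧ (c < 0 → x = 1)) := by
  obtain ⟨hx0, hx1⟩ := hx
  constructor
  · intro h
    refine ⟨fun hc => ?_, fun hc => ?_⟩
    · have h0 := h 0 (by norm_num)
      have hle : x ≤ 0 := by nlinarith
      linarith
    · have h1 := h 1 (by norm_num)
      have : 1 ≤ x := by nlinarith
      linarith
  · rintro ⟨h0, h1⟩ y ⟨hy0, hy1⟩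
    rcases lt_trichotomy c 0 with hc | hc | hc
    · rw [h1 hc]; nlinarith
    · simp [hc]
    · rw [h0 hc]; nlinarith

set_option maxHeartbeats 1000000 in
/-- If `pc/(1 + pv pc) < R/d < 1/pv` (with `pv ≥ 1`, `pc ≥ 1`), the Nash
equilibria are exactly `(1,1)`, `(0,0)` and the mixed one
`(g1(R/d), g2(R/d))`. -/
theorem nash_eq_case_middle_reward
    (pv pc d R : ℝ) (hpv : 1 ≤ pv) (hpc : 1 ≤ pc) (hd : 0 < d) (hR : 0 ≤ R)
    (h1 : pc / (1 + pv * pc) < R / d) (h2 : R / d < 1 / pv) :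
    {p : ℝ × ℝ | IsNashEq pv pc d R p}
      = {((1 : ℝ), (1 : ℝ)), ((0 : ℝ), (0 : ℝ)),
          (g1 pv pc (R / d), g2 pv pc (R / d))} := by
  have hd' : d ≠ 0 := ne_of_gt hd
  have hpv0 : (0:ℝ) < pv := lt_of_lt_of_le one_pos hpv
  have hpc0 : (0:ℝ) < pc := lt_of_lt_of_le one_pos hpc
  have hs0 : (0:ℝ) < 1 + pv * pc := by positivity
  obtain ⟨z, rfl⟩ : ∃ z, R = d * z := ⟨R / d, by field_simp⟩
  have hdz : d * z / d = z := by field_simp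
  rw [hdz] at h1 h2 ⊢
  -- basic inequalities on z
  have hzpv : z * pv < 1 := (lt_div_iff₀ hpv0).mp h2
  have hzs : pc < z * (1 + pv * pc) := (div_lt_iff₀ hs0).mp h1
  have hz0 : 0 < z := by nlinarith
  have hz1 : z < 1 := by nlinarith
  have hN2 : 1 / (1 + pv * pc) < z := by rw [div_lt_iff₀ hs0]; nlinarith
  have hD1 : 0 < (2 * pv * pc + 1) / (pv * (1 + pv * pc)) - z := by
    have : z < (2 * pv * pc + 1) / (pv * (1 + pv * pc)) := by
      rw [lt_div_iff₀ (by positivity)]; nlinarith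
    linarith
  have hD2 : 0 < (2 + pv * pc) / (1 + pv * pc) - z := by
    have : z < (2 + pv * pc) / (1 + pv * pc) := by
      rw [lt_div_iff₀ hs0]; nlinarith
    linarith
  have ha0 : 0 < g1 pv pc z := by
    rw [g1]
    apply div_pos _ hD1
    have : pc / (1 + pv * pc) < z := h1
    nlinarith [mul_pos hpv0 hpc0]
  have ha1 : g1 pv pc z < 1 := by
    rw [g1, div_lt_one hD1]
    have key : (2 * pv * pc + 1) / (pv * (1 + pv * pc)) - z
        - pv * pc * (z - pc / (1 + pv * pc)) = (1 + pv * pc) * (1/pv - z) := by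
      field_simp; ring
    nlinarith [mul_pos hs0 (sub_pos.mpr h2)]
  have hb0 : 0 < g2 pv pc z := by
    rw [g2]
    exact div_pos (by linarith) (by positivity)
  have hb1 : g2 pv pc z < 1 := by
    rw [g2, div_lt_one (by positivity)]
    have key : pv * pc * ((2 + pv * pc) / (1 + pv * pc) - z)
        - (z - 1 / (1 + pv * pc)) = (1 + pv * pc) * (1 - z) := by
      field_simp; ring
    nlinarith [mul_pos hs0 (sub_pos.mpr hz1)]
  -- payoff factor identities
  obtain ⟨m2, hm2, hu1⟩ : ∃ m : ℝ, 0 < m ∧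
      ∀ y x2 : ℝ, u1 pv pc d (d * z) y x2 = (1 - y) * (m * (g2 pv pc z - x2)) := by
    have hDpos : 0 < pv * pc * ((2 + pv * pc) / (1 + pv * pc) - z) :=
      mul_pos (mul_pos hpv0 hpc0) hD2
    refine ⟨d * (pv * pc * ((2 + pv * pc) / (1 + pv * pc) - z)) / (1 + pv * pc),
      div_pos (mul_pos hd hDpos) hs0, fun y x2 => ?_⟩
    have hgb : g2 pv pc z * (pv * pc * ((2 + pv * pc) / (1 + pv * pc) - z))
        = z - 1 / (1 + pv * pc) := by
      rw [g2, div_mul_cancel₀ _ (ne_of_gt hDpos)]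
    rw [u1, show d * (pv * pc * ((2 + pv * pc) / (1 + pv * pc) - z)) / (1 + pv * pc) *
        (g2 pv pc z - x2)
        = d / (1 + pv * pc) * (g2 pv pc z * (pv * pc * ((2 + pv * pc) / (1 + pv * pc) - z)))
          - d * (pv * pc * ((2 + pv * pc) / (1 + pv * pc) - z)) / (1 + pv * pc) * x2
        from by ring, hgb]
    field_simp
    ring
  obtain ⟨m1, hm1, hu2⟩ : ∃ m : ℝ, 0 < m ∧
      ∀ x1 y : ℝ, u2 pv pc d (d * z) x1 y = (1 - y) * (m * (g1 pv pc z - x1)) := by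
    refine ⟨d * ((2 * pv * pc + 1) / (pv * (1 + pv * pc)) - z) / (1 + pv * pc),
      div_pos (mul_pos hd hD1) hs0, fun x1 y => ?_⟩
    have hga : g1 pv pc z * ((2 * pv * pc + 1) / (pv * (1 + pv * pc)) - z)
        = pv * pc * (z - pc / (1 + pv * pc)) := by
      rw [g1, div_mul_cancel₀ _ (ne_of_gt hD1)]
    rw [u2, show d * ((2 * pv * pc + 1) / (pv * (1 + pv * pc)) - z) / (1 + pv * pc) *
        (g1 pv pc z - x1)
        = d / (1 + pv * pc) * (g1 pv pc z * ((2 * pv * pc + 1) / (pv * (1 + pv * pc)) - z))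
          - d * ((2 * pv * pc + 1) / (pv * (1 + pv * pc)) - z) / (1 + pv * pc) * x1
        from by ring, hga]
    field_simp
    ring
  set a := g1 pv pc z
  set b := g2 pv pc z
  -- characterization of Nash equilibria
  have hchar : ∀ x1 x2 : ℝ, IsNashEq pv pc d (d * z) (x1, x2) ↔
      (x1 ∈ Set.Icc (0:ℝ) 1 ∧ x2 ∈ Set.Icc (0:ℝ) 1 ∧
       (x2 < b → x1 = 0) ∧ (b < x2 → x1 = 1) ∧
       (x1 < a → x2 = 0) ∧ (a < x1 → x2 = 1)) := by
    intro x1 x2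
    rw [IsNashEq]
    simp only [hu1, hu2]
    clear hu1 hu2
    constructor
    · rintro ⟨hx1, hx2, hbr1, hbr2⟩
      rw [br_iff _ _ hx1] at hbr1
      rw [br_iff _ _ hx2] at hbr2
      refine ⟨hx1, hx2, fun h => hbr1.1 (by nlinarith), fun h => hbr1.2 (by nlinarith),
        fun h => hbr2.1 (by nlinarith), fun h => hbr2.2 (by nlinarith)⟩
    · rintro ⟨hx1, hx2, c1, c2, c3, c4⟩
      refine ⟨hx1, hx2, ?_, ?_⟩
      · rw [br_iff _ _ hx1]
        refine ⟨fun h => c1 ?_, fun h => c2 ?_⟩ <;> nlinarith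
      · rw [br_iff _ _ hx2]
        refine ⟨fun h => c3 ?_, fun h => c4 ?_⟩ <;> nlinarith
  ext ⟨x1, x2⟩
  simp only [Set.mem_setOf_eq, Set.mem_insert_iff, Set.mem_singleton_iff, Prod.mk.injEq,
    hchar]
  constructor
  · rintro ⟨⟨hx10, hx11⟩, ⟨hx20, hx21⟩, c1, c2, c3, c4⟩
    rcases lt_trichotomy x2 b with h | h | h
    · have e1 : x1 = 0 := c1 h
      have e2 : x2 = 0 := c3 (by rw [e1]; exact ha0)
      exact Or.inr (Or.inl ⟨e1, e2⟩)
    · have e1 : x1 = a := by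
        rcases lt_trichotomy x1 a with h' | h' | h'
        · exact absurd (c3 h') (by rw [h]; exact ne_of_gt hb0)
        · exact h'
        · exact absurd (c4 h') (by rw [h]; exact ne_of_lt hb1)
      exact Or.inr (Or.inr ⟨e1, h⟩)
    · have e1 : x1 = 1 := c2 h
      have e2 : x2 = 1 := c4 (by rw [e1]; exact ha1)
      exact Or.inl ⟨e1, e2⟩
  · rintro (⟨e1, e2⟩ | ⟨e1, e2⟩ | ⟨e1, e2⟩) <;> subst e1 <;> subst e2
    · exact ⟨⟨by norm_num, by norm_num⟩, ⟨by norm_num, by norm_num⟩,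
        fun h => absurd h (by linarith), fun _ => rfl,
        fun h => absurd h (by linarith), fun _ => rfl⟩
    · exact ⟨⟨le_refl 0, by norm_num⟩, ⟨le_refl 0, by norm_num⟩,
        fun _ => rfl, fun h => absurd h (by linarith),
        fun _ => rfl, fun h => absurd h (by linarith)⟩
    · exact ⟨⟨le_of_lt ha0, le_of_lt ha1⟩, ⟨le_of_lt hb0, le_of_lt hb1⟩,
        fun h => absurd h (lt_irrefl b), fun h => absurd h (lt_irrefl b),
        fun h => absurd h (lt_irrefl a), fun h => absurd h (lt_irrefl a)⟩
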